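/- Define h : {(x,y) : 0 ≤ x ≤ y ≤ 1} → ℝ by h(x,y) = max(x+y, 2/3) + (1/2)·max(x+y, 1) − (1/2)·max(y, 2/3) − 1/6. Then for all 0 ≤ θ₁ ≤ θ₂ ≤ θ₃ ≤ 1, writing s = max(θ₁+θ₂+θ₃, 1), we have 2s ≤ h(θ₁,θ₂) + h(θ₁,θ₃) + h(θ₂,θ₃) ≤ (7/3)·s. -/
import Mathlib


noncomputable def hG (x y : ℝ) : ℝ :=
  max (x + y) (2 / 3) + 1 / 2 * max (x + y) 1 - 1 / 2 * max y (2 / 3) - 1 / 6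

set_option maxHeartbeats 4000000 in
theorem stmt_5 : ∀ θ₁ θ₂ θ₃ : ℝ, 0 ≤ θ₁ → θ₁ ≤ θ₂ → θ₂ ≤ θ₃ → θ₃ ≤ 1 →
    2 * max (θ₁ + θ₂ + θ₃) 1 ≤ hG θ₁ θ₂ + hG θ₁ θ₃ + hG θ₂ θ₃ ∧
    hG θ₁ θ₂ + hG θ₁ θ₃ + hG θ₂ θ₃ ≤ 7 / 3 * max (θ₁ + θ₂ + θ₃) 1 := by
  intro θ₁ θ₂ θ₃ h0 h12 h23 h31
  simp only [hG]
  rcases le_total (θ₁ + θ₂ + θ₃) 1 with hs | hs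
  · rw [max_eq_right hs, max_eq_right (show θ₁ + θ₂ ≤ 1 by linarith),
      max_eq_right (show θ₁ + θ₃ ≤ 1 by linarith),
      max_eq_right (show θ₂ + θ₃ ≤ 1 by linarith)]
    rcases le_total (θ₁ + θ₂) (2/3) with h1 | h1 <;>
    rcases le_total (θ₁ + θ₃) (2/3) with h2 | h2 <;>
    rcases le_total (θ₂ + θ₃) (2/3) with h3 | h3 <;>
    rcases le_total θ₂ (2/3) with h4 | h4 <;>
    rcases le_total θ₃ (2/3) with h5 | h5 <;>
    simp only [max_eq_left, max_eq_right, *] <;>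
    constructor <;> linarith
  · rw [max_eq_left hs, max_eq_left (show (2:ℝ)/3 ≤ θ₂ + θ₃ by linarith)]
    rcases le_total (θ₁ + θ₂) (2/3) with h1 | h1 <;>
    rcases le_total (θ₁ + θ₂) 1 with h1' | h1' <;>
    rcases le_total (θ₁ + θ₃) (2/3) with h2 | h2 <;>
    rcases le_total (θ₁ + θ₃) 1 with h2' | h2' <;>
    rcases le_total (θ₂ + θ₃) 1 with h3' | h3' <;>
    rcases le_total θ₂ (2/3) with h4 | h4 <;>
    rcases le_total θ₃ (2/3) with h5 | h5 <;>
    simp only [max_eq_left, max_eq_right, *] <;>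
    constructor <;> linarith
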